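/- There exists a constant c > 0 with the following property: for every integer n ≥ 8 with M = ⌊n/4⌋, every strategy S, and every integer s ≥ 1, if there is an index t with 1 ≤ t ≤ M such that among the rounds i ∈ {t, t+1, …, M−1} the number of i with x_i = x_{i+1} (pauses in the x-projection) exceeds the number of i with x_i ≠ x_{i+1} (moves in the x-projection) by at least s, then t(S) ≥ c s². -/

import Mathlib

open Finset

/-- One step of the backward recursion for the catch probabilities: given the survivor's
position `c = (x_i, y_i)` in round `i` and the function `p_S^{i+1}`, produce `p_S^i`. -/
noncomputable def pstep (c : ℤ × ℤ) (f : ℤ × ℤ → ℝ) : ℤ × ℤ → ℝ :=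
  fun q =>
    if |q.1 - c.1| + |q.2 - c.2| ≤ 1 then 1
    else if q.1 ≠ c.1 ∧ q.2 ≠ c.2 then
      (f (q.1 + Int.sign (c.1 - q.1), q.2) + f (q.1, q.2 + Int.sign (c.2 - q.2))) / 2
    else if q.1 = c.1 then f (q.1, q.2 + Int.sign (c.2 - q.2))
    else f (q.1 + Int.sign (c.1 - q.1), q.2)

/-- `pAux S M j` is `p_S^{M-j}`: `pAux S M 0 = p_S^M` and each further step applies the
backward recursion centred at the survivor's position `S (M - (j+1))`. -/
noncomputable def pAux (S : ℕ → ℤ × ℤ) (M : ℕ) : ℕ → ℤ × ℤ → ℝ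
  | 0 => fun q => if |q.1 - (S M).1| + |q.2 - (S M).2| ≤ 1 then 1 else 0
  | j + 1 => pstep (S (M - (j + 1))) (pAux S M j)

/-- `pS S M i = p_S^i` (for `1 ≤ i ≤ M`). -/
noncomputable def pS (S : ℕ → ℤ × ℤ) (M : ℕ) (i : ℕ) : ℤ × ℤ → ℝ :=
  pAux S M (M - i)

/-- `t(S) = ∑_{(x,y) ∈ ℤ²} p_S(x,y)` where `p_S = p_S^1`. -/
noncomputable def tS (S : ℕ → ℤ × ℤ) (M : ℕ) : ℝ :=
  ∑ᶠ q : ℤ × ℤ, pS S M 1 q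

/-- A strategy for the first `M` moves: a sequence of vertices of `ℤ²`, consecutive ones at
distance at most `1`, finishing at `(0,0)`. -/
def IsStrategy (S : ℕ → ℤ × ℤ) (M : ℕ) : Prop :=
  S M = (0, 0) ∧
    ∀ i, 1 ≤ i → i < M → |(S (i + 1)).1 - (S i).1| + |(S (i + 1)).2 - (S i).2| ≤ 1

lemma sign_shift {x c : ℤ} (h : x ≠ c) : |x + (c - x).sign - c| = |x - c| - 1 := by
  rcases lt_or_gt_of_ne h with hlt | hgt
  · rw [Int.sign_eq_one_of_pos (by omega)]
    simp only [Int.abs_eq_natAbs]; omega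
  · rw [Int.sign_eq_neg_one_of_neg (by omega)]
    simp only [Int.abs_eq_natAbs]; omega

lemma pstep_nonneg (c : ℤ × ℤ) (f : ℤ × ℤ → ℝ) (h0 : ∀ q, 0 ≤ f q) (q : ℤ × ℤ) :
    0 ≤ pstep c f q := by
  unfold pstep
  split_ifs with h1 h2 h3
  · norm_num
  · have := h0 (q.1 + Int.sign (c.1 - q.1), q.2)
    have := h0 (q.1, q.2 + Int.sign (c.2 - q.2))
    linarith
  · exact h0 _
  · exact h0 _

lemma pstep_le_one (c : ℤ × ℤ) (f : ℤ × ℤ → ℝ) (h1 : ∀ q, f q ≤ 1) (q : ℤ × ℤ) :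
    pstep c f q ≤ 1 := by
  unfold pstep
  split_ifs with ha hb hc
  · norm_num
  · have := h1 (q.1 + Int.sign (c.1 - q.1), q.2)
    have := h1 (q.1, q.2 + Int.sign (c.2 - q.2))
    linarith
  · exact h1 _
  · exact h1 _

def phi1 (c q : ℤ × ℤ) : ℤ × ℤ :=
  if q.1 = c.1 ∧ q.2 ≠ c.2 then (q.1, q.2 + (c.2 - q.2).sign)
  else (q.1 + (c.1 - q.1).sign, q.2)

def phi2 (c q : ℤ × ℤ) : ℤ × ℤ :=
  if q.2 = c.2 ∧ q.1 ≠ c.1 then (q.1 + (c.1 - q.1).sign, q.2)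
  else (q.1, q.2 + (c.2 - q.2).sign)

lemma phi_le (c : ℤ × ℤ) (f : ℤ × ℤ → ℝ) (h1 : ∀ q, f q ≤ 1) (q : ℤ × ℤ) :
    f (phi1 c q) + f (phi2 c q) ≤ 2 * pstep c f q := by
  unfold pstep phi1 phi2
  by_cases e1 : q.1 = c.1 <;> by_cases e2 : q.2 = c.2
  · -- q = c : caught
    have hc : |q.1 - c.1| + |q.2 - c.2| ≤ 1 := by rw [e1, e2]; simp
    rw [if_pos hc]
    split_ifs <;>
      linarith [h1 (q.1 + (c.1 - q.1).sign, q.2), h1 (q.1, q.2 + (c.2 - q.2).sign)]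
  · -- on vertical axis
    have hphi : (if q.1 = c.1 ∧ q.2 ≠ c.2 then (q.1, q.2 + (c.2 - q.2).sign)
        else (q.1 + (c.1 - q.1).sign, q.2)) = (q.1, q.2 + (c.2 - q.2).sign) :=
      if_pos ⟨e1, e2⟩
    have hphi2 : (if q.2 = c.2 ∧ q.1 ≠ c.1 then (q.1 + (c.1 - q.1).sign, q.2)
        else (q.1, q.2 + (c.2 - q.2).sign)) = (q.1, q.2 + (c.2 - q.2).sign) := by
      rw [if_neg]; tauto
    rw [hphi, hphi2]
    by_cases hc : |q.1 - c.1| + |q.2 - c.2| ≤ 1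
    · rw [if_pos hc]; linarith [h1 (q.1, q.2 + (c.2 - q.2).sign)]
    · rw [if_neg hc, if_neg (by tauto), if_pos e1]; linarith
  · -- on horizontal axis
    have hphi : (if q.1 = c.1 ∧ q.2 ≠ c.2 then (q.1, q.2 + (c.2 - q.2).sign)
        else (q.1 + (c.1 - q.1).sign, q.2)) = (q.1 + (c.1 - q.1).sign, q.2) := by
      rw [if_neg]; tauto
    have hphi2 : (if q.2 = c.2 ∧ q.1 ≠ c.1 then (q.1 + (c.1 - q.1).sign, q.2)
        else (q.1, q.2 + (c.2 - q.2).sign)) = (q.1 + (c.1 - q.1).sign, q.2) :=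
      if_pos ⟨e2, e1⟩
    rw [hphi, hphi2]
    by_cases hc : |q.1 - c.1| + |q.2 - c.2| ≤ 1
    · rw [if_pos hc]; linarith [h1 (q.1 + (c.1 - q.1).sign, q.2)]
    · rw [if_neg hc, if_neg (by tauto), if_neg e1]; linarith
  · -- generic
    have hc : ¬ (|q.1 - c.1| + |q.2 - c.2| ≤ 1) := by
      have a1 : 1 ≤ |q.1 - c.1| := Int.one_le_abs (sub_ne_zero.2 e1)
      have a2 : 1 ≤ |q.2 - c.2| := Int.one_le_abs (sub_ne_zero.2 e2)
      omega
    have hphi : (if q.1 = c.1 ∧ q.2 ≠ c.2 then (q.1, q.2 + (c.2 - q.2).sign)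
        else (q.1 + (c.1 - q.1).sign, q.2)) = (q.1 + (c.1 - q.1).sign, q.2) := by
      rw [if_neg]; tauto
    have hphi2 : (if q.2 = c.2 ∧ q.1 ≠ c.1 then (q.1 + (c.1 - q.1).sign, q.2)
        else (q.1, q.2 + (c.2 - q.2).sign)) = (q.1, q.2 + (c.2 - q.2).sign) := by
      rw [if_neg]; tauto
    rw [hphi, hphi2, if_neg hc, if_pos ⟨e1, e2⟩]
    linarith


section helper
variable {α β : Type*} [DecidableEq α]

lemma sum_ge_reindex (A : Finset α) (B : Finset β) (g : α → ℝ) (h : β → ℝ) (v : β → α)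
    (hv : Set.InjOn v B) (hmem : ∀ b ∈ B, v b ∈ A)
    (heq : ∀ b ∈ B, h b = g (v b)) (hg : ∀ a ∈ A, 0 ≤ g a) :
    ∑ b ∈ B, h b ≤ ∑ a ∈ A, g a := by
  rw [Finset.sum_congr rfl heq, ← Finset.sum_image (fun x hx y hy => hv hx hy)]
  exact Finset.sum_le_sum_of_subset_of_nonneg (Finset.image_subset_iff.2 hmem)
    (fun a ha _ => hg a ha)

lemma sum_ge_pair_reindex (A B1 : Finset α) (B : Finset β) (g : α → ℝ) (h : β → ℝ)
    (v : β → α) (hv : Set.InjOn v B) (hmem : ∀ b ∈ B, v b ∈ A) (hB1 : B1 ⊆ A)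
    (hdisj : ∀ b ∈ B, v b ∉ B1)
    (heq : ∀ b ∈ B, h b = g (v b)) (hg : ∀ a ∈ A, 0 ≤ g a) :
    ∑ a ∈ B1, g a + ∑ b ∈ B, h b ≤ ∑ a ∈ A, g a := by
  rw [Finset.sum_congr rfl heq, ← Finset.sum_image (fun x hx y hy => hv hx hy)]
  rw [← Finset.sum_union]
  · exact Finset.sum_le_sum_of_subset_of_nonneg
      (Finset.union_subset hB1 (Finset.image_subset_iff.2 hmem)) (fun a ha _ => hg a ha)
  · rw [Finset.disjoint_right]
    intro a ha
    obtain ⟨b, hb, rfl⟩ := Finset.mem_image.1 ha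
    exact hdisj b hb

end helper

noncomputable def mybox (R : ℤ) : Finset (ℤ × ℤ) := (Finset.Icc (-R) R) ×ˢ (Finset.Icc (-R) R)

lemma mem_box {R : ℤ} {q : ℤ × ℤ} : q ∈ mybox R ↔ |q.1| ≤ R ∧ |q.2| ≤ R := by
  simp [mybox, Finset.mem_product, Finset.mem_Icc, abs_le]

def u1 (c r : ℤ × ℤ) : ℤ × ℤ := if c.1 ≤ r.1 then (r.1 + 1, r.2) else (r.1 - 1, r.2)
def u2 (c r : ℤ × ℤ) : ℤ × ℤ := if c.2 ≤ r.2 then (r.1, r.2 + 1) else (r.1, r.2 - 1)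

lemma phi1_u1 (c r : ℤ × ℤ) : phi1 c (u1 c r) = r := by
  unfold phi1 u1
  split_ifs with h h2 h3
  · exact absurd h2.1 (by simp; omega)
  · simp only
    rw [Int.sign_eq_neg_one_of_neg (by simp; omega)]
    simp
  · exact absurd h3.1 (by simp; omega)
  · simp only
    rw [Int.sign_eq_one_of_pos (by simp; omega)]
    simp

lemma phi2_u2 (c r : ℤ × ℤ) : phi2 c (u2 c r) = r := by
  unfold phi2 u2
  split_ifs with h h2 h3
  · exact absurd h2.1 (by simp; omega)
  · simp only
    rw [Int.sign_eq_neg_one_of_neg (by simp; omega)]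
    simp
  · exact absurd h3.1 (by simp; omega)
  · simp only
    rw [Int.sign_eq_one_of_pos (by simp; omega)]
    simp

lemma u1_inj (c : ℤ × ℤ) : Function.Injective (u1 c) := by
  intro a b h
  unfold u1 at h
  split_ifs at h with h1 h2 h3 <;>
    (rw [Prod.ext_iff] at h ⊢; simp only at h; constructor <;> omega)

lemma u2_inj (c : ℤ × ℤ) : Function.Injective (u2 c) := by
  intro a b h
  unfold u2 at h
  split_ifs at h with h1 h2 h3 <;>
    (rw [Prod.ext_iff] at h ⊢; simp only at h; constructor <;> omega)

lemma abs_helper : True := trivial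

lemma sum_f_eq_sub {f : ℤ × ℤ → ℝ} {ρ R : ℤ} (hρ : ρ ≤ R)
    (hsupp : ∀ q : ℤ × ℤ, ¬(|q.1| ≤ ρ ∧ |q.2| ≤ ρ) → f q = 0) :
    ∑ q ∈ mybox ρ, f q = ∑ q ∈ mybox R, f q := by
  apply Finset.sum_subset
  · intro q hq
    rw [mem_box] at hq ⊢
    exact ⟨le_trans hq.1 hρ, le_trans hq.2 hρ⟩
  · intro q _ hq
    apply hsupp
    rw [mem_box] at hq
    tauto

lemma sum_pstep_ge (c : ℤ × ℤ) (f : ℤ × ℤ → ℝ) (R : ℤ) (hR : 1 ≤ R)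
    (h0 : ∀ q, 0 ≤ f q) (h1 : ∀ q, f q ≤ 1)
    (hsupp : ∀ q : ℤ × ℤ, ¬(|q.1| ≤ R - 1 ∧ |q.2| ≤ R - 1) → f q = 0) :
    ∑ q ∈ mybox R, f q ≤ ∑ q ∈ mybox R, pstep c f q := by
  have key : ∀ q ∈ mybox R, f (phi1 c q) + f (phi2 c q) ≤ 2 * pstep c f q :=
    fun q _ => phi_le c f h1 q
  have A1 : ∑ q ∈ mybox (R - 1), f q ≤ ∑ q ∈ mybox R, f (phi1 c q) := by
    apply sum_ge_reindex (v := u1 c)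
    · exact (u1_inj c).injOn
    · intro r hr
      rw [mem_box] at hr ⊢
      unfold u1
      split_ifs <;> simp only [Int.abs_eq_natAbs] at * <;> constructor <;> omega
    · intro r _; rw [phi1_u1]
    · intro a _; exact h0 _
  have A2 : ∑ q ∈ mybox (R - 1), f q ≤ ∑ q ∈ mybox R, f (phi2 c q) := by
    apply sum_ge_reindex (v := u2 c)
    · exact (u2_inj c).injOn
    · intro r hr
      rw [mem_box] at hr ⊢
      unfold u2
      split_ifs <;> simp only [Int.abs_eq_natAbs] at * <;> constructor <;> omega
    · intro r _; rw [phi2_u2]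
    · intro a _; exact h0 _
  have A0 : ∑ q ∈ mybox (R - 1), f q = ∑ q ∈ mybox R, f q :=
    sum_f_eq_sub (by omega) hsupp
  have B : ∑ q ∈ mybox R, (f (phi1 c q) + f (phi2 c q)) ≤
      ∑ q ∈ mybox R, 2 * pstep c f q := Finset.sum_le_sum key
  rw [Finset.sum_add_distrib] at B
  rw [← Finset.mul_sum] at B
  linarith

noncomputable def colL (K : ℤ) (f : ℤ × ℤ → ℝ) (x : ℤ) : ℝ := ∑ y ∈ Finset.Icc (-K) K, f (x, y)

lemma colL_nonneg {K : ℤ} {f : ℤ × ℤ → ℝ} (h0 : ∀ q, 0 ≤ f q) (x : ℤ) : 0 ≤ colL K f x :=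
  Finset.sum_nonneg fun y _ => h0 _

def vy (m y : ℤ) : ℤ := if m ≤ y then y + 1 else y - 1

lemma vy_inj (m : ℤ) : Function.Injective (vy m) := by
  intro a b h
  unfold vy at h
  split_ifs at h <;> omega

lemma col_support_sum {K : ℤ} {f : ℤ × ℤ → ℝ} (hK : 2 ≤ K)
    (hsupp : ∀ q : ℤ × ℤ, ¬(|q.1| ≤ K - 2 ∧ |q.2| ≤ K - 2) → f q = 0) (x : ℤ) :
    ∑ y ∈ Finset.Icc (-(K - 2)) (K - 2), f (x, y) = colL K f x := by
  apply Finset.sum_subset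
  · intro y hy
    rw [Finset.mem_Icc] at hy ⊢
    omega
  · intro y _ hy
    apply hsupp
    rw [Finset.mem_Icc] at hy
    simp only [Int.abs_eq_natAbs]
    omega

lemma colL_pstep_center (c : ℤ × ℤ) (f : ℤ × ℤ → ℝ) (K : ℤ) (hK : 2 ≤ K)
    (hc : |c.2| ≤ K - 2)
    (h0 : ∀ q, 0 ≤ f q) (h1 : ∀ q, f q ≤ 1)
    (hsupp : ∀ q : ℤ × ℤ, ¬(|q.1| ≤ K - 2 ∧ |q.2| ≤ K - 2) → f q = 0) :
    2 + colL K f c.1 ≤ colL K (pstep c f) c.1 := by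
  have main : ∑ y ∈ Finset.Icc (c.2 - 1) (c.2 + 1), pstep c f (c.1, y) +
      ∑ y ∈ (Finset.Icc (-(K - 2)) (K - 2)).erase c.2, f (c.1, y) ≤
      ∑ y ∈ Finset.Icc (-K) K, pstep c f (c.1, y) := by
    apply sum_ge_pair_reindex (v := vy c.2)
    · exact (vy_inj c.2).injOn
    · intro b hb
      rw [Finset.mem_erase, Finset.mem_Icc] at hb
      rw [Finset.mem_Icc]
      unfold vy; split_ifs <;> omega
    · intro y hy
      rw [Finset.mem_Icc] at hy ⊢
      simp only [Int.abs_eq_natAbs] at hc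
      omega
    · intro b hb
      rw [Finset.mem_erase, Finset.mem_Icc] at hb
      rw [Finset.mem_Icc]
      unfold vy; split_ifs <;> omega
    · intro b hb
      rw [Finset.mem_erase, Finset.mem_Icc] at hb
      unfold vy pstep
      split_ifs with hle hcaught hboth hax hcaught2 hboth2 hax2
      · exfalso; simp only [Int.abs_eq_natAbs] at hcaught; omega
      · exact absurd rfl hboth.1
      · simp only
        rw [Int.sign_eq_neg_one_of_neg (by omega)]
        norm_num
      · exact absurd rfl hax
      · exfalso; simp only [Int.abs_eq_natAbs] at hcaught2; omega
      · exact absurd rfl hboth2.1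
      · simp only
        rw [Int.sign_eq_one_of_pos (by omega)]
        norm_num
      · exact absurd rfl hax2
    · intro y _
      exact pstep_nonneg c f h0 _
  have e1 : ∑ y ∈ Finset.Icc (c.2 - 1) (c.2 + 1), pstep c f (c.1, y) = 3 := by
    have : ∀ y ∈ Finset.Icc (c.2 - 1) (c.2 + 1), pstep c f (c.1, y) = 1 := by
      intro y hy
      rw [Finset.mem_Icc] at hy
      unfold pstep
      rw [if_pos]
      simp only [Int.abs_eq_natAbs]
      omega
    rw [Finset.sum_congr rfl this, Finset.sum_const]
    have h3 : (c.2 + 1 + 1 - (c.2 - 1)).toNat = 3 := by omega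
    simp [h3]
  have e2 : ∑ y ∈ (Finset.Icc (-(K - 2)) (K - 2)).erase c.2, f (c.1, y) =
      colL K f c.1 - f (c.1, c.2) := by
    have hmem : c.2 ∈ Finset.Icc (-(K - 2)) (K - 2) := by
      rw [Finset.mem_Icc]
      simp only [Int.abs_eq_natAbs] at hc
      omega
    have := Finset.sum_erase_add (Finset.Icc (-(K - 2)) (K - 2)) (fun y => f (c.1, y)) hmem
    rw [col_support_sum hK hsupp c.1] at *
    linarith [this]
  rw [e1, e2] at main
  have : f (c.1, c.2) ≤ 1 := h1 _
  have hrw : colL K (pstep c f) c.1 = ∑ y ∈ Finset.Icc (-K) K, pstep c f (c.1, y) := rfl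
  rw [hrw]
  linarith

lemma colL_pstep_off (c : ℤ × ℤ) (f : ℤ × ℤ → ℝ) (K : ℤ) (hK : 2 ≤ K)
    (hc : |c.2| ≤ K - 2) {x : ℤ} (hx : x ≠ c.1)
    (h0 : ∀ q, 0 ≤ f q) (h1 : ∀ q, f q ≤ 1)
    (hsupp : ∀ q : ℤ × ℤ, ¬(|q.1| ≤ K - 2 ∧ |q.2| ≤ K - 2) → f q = 0) :
    colL K f x / 2 + colL K f (x + (c.1 - x).sign) / 2 ≤ colL K (pstep c f) x := by
  have key : ∀ y ∈ Finset.Icc (-K) K,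
      f (phi1 c (x, y)) + f (phi2 c (x, y)) ≤ 2 * pstep c f (x, y) :=
    fun y _ => phi_le c f h1 (x, y)
  have B := Finset.sum_le_sum key
  rw [Finset.sum_add_distrib] at B
  have E1 : ∑ y ∈ Finset.Icc (-K) K, f (phi1 c (x, y)) = colL K f (x + (c.1 - x).sign) := by
    apply Finset.sum_congr rfl
    intro y _
    have : phi1 c (x, y) = (x + (c.1 - x).sign, y) := by
      unfold phi1
      rw [if_neg]
      intro h
      exact hx h.1
    rw [this]
  have E2 : colL K f x ≤ ∑ y ∈ Finset.Icc (-K) K, f (phi2 c (x, y)) := by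
    rw [← col_support_sum hK hsupp x]
    apply sum_ge_reindex (v := vy c.2)
    · exact (vy_inj c.2).injOn
    · intro y hy
      rw [Finset.mem_Icc] at hy ⊢
      unfold vy; split_ifs <;> omega
    · intro y hy
      rw [Finset.mem_Icc] at hy
      have : phi2 c (x, vy c.2 y) = (x, y) := by
        unfold phi2 vy
        split_ifs with hle h2 h3
        · exfalso; omega
        · simp only
          rw [Int.sign_eq_neg_one_of_neg (by omega)]
          norm_num
        · exfalso; omega
        · simp only
          rw [Int.sign_eq_one_of_pos (by omega)]
          norm_num
      rw [this]
    · intro y _; exact h0 _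
  have hrw : colL K (pstep c f) x = ∑ y ∈ Finset.Icc (-K) K, pstep c f (x, y) := rfl
  rw [hrw]
  have B2 : ∑ y ∈ Finset.Icc (-K) K, 2 * pstep c f (x, y) =
      2 * ∑ y ∈ Finset.Icc (-K) K, pstep c f (x, y) := by rw [Finset.mul_sum]
  rw [B2, E1] at B
  linarith

lemma pAux_nonneg (S : ℕ → ℤ × ℤ) (M : ℕ) : ∀ j q, 0 ≤ pAux S M j q := by
  intro j
  induction j with
  | zero => intro q; simp only [pAux]; split_ifs <;> norm_num
  | succ j ih => intro q; exact pstep_nonneg _ _ ih q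

lemma pAux_le_one (S : ℕ → ℤ × ℤ) (M : ℕ) : ∀ j q, pAux S M j q ≤ 1 := by
  intro j
  induction j with
  | zero => intro q; simp only [pAux]; split_ifs <;> norm_num
  | succ j ih => intro q; exact pstep_le_one _ _ ih q

lemma sign_bound (z : ℤ) : -1 ≤ z.sign ∧ z.sign ≤ 1 := by
  rcases lt_trichotomy z 0 with h | h | h
  · rw [Int.sign_eq_neg_one_of_neg h]; omega
  · rw [h]; simp
  · rw [Int.sign_eq_one_of_pos h]; omega

lemma center_bound {S : ℕ → ℤ × ℤ} {M : ℕ} (hS : IsStrategy S M) :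
    ∀ k i : ℕ, 1 ≤ i → i + k = M → |(S i).1| + |(S i).2| ≤ (k : ℤ) := by
  intro k
  induction k with
  | zero =>
    intro i h1 h2
    have : i = M := by omega
    rw [this, hS.1]
    simp
  | succ k ih =>
    intro i h1 h2
    have hstep := hS.2 i h1 (by omega)
    have hi := ih (i + 1) (by omega) (by omega)
    simp only [Int.abs_eq_natAbs] at *
    omega

lemma pAux_supp {S : ℕ → ℤ × ℤ} {M : ℕ} (hS : IsStrategy S M) :
    ∀ j, j + 1 ≤ M → ∀ q : ℤ × ℤ,
      ¬(|q.1| ≤ (M : ℤ) + j + 1 ∧ |q.2| ≤ (M : ℤ) + j + 1) → pAux S M j q = 0 := by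
  intro j
  induction j with
  | zero =>
    intro _ q hq
    simp only [pAux, hS.1]
    rw [if_neg]
    simp only [Int.abs_eq_natAbs] at *
    omega
  | succ j ih =>
    intro hj q hq
    have hcb := center_bound hS (j + 1) (M - (j + 1)) (by omega) (by omega)
    simp only [pAux, pstep]
    have hs1 := sign_bound ((S (M - (j + 1))).1 - q.1)
    have hs2 := sign_bound ((S (M - (j + 1))).2 - q.2)
    have hnc : ¬(|q.1 - (S (M - (j + 1))).1| + |q.2 - (S (M - (j + 1))).2| ≤ 1) := by
      simp only [Int.abs_eq_natAbs] at *
      omega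
    rw [if_neg hnc]
    have z1 : pAux S M j (q.1 + ((S (M - (j + 1))).1 - q.1).sign, q.2) = 0 := by
      apply ih (by omega)
      simp only [Int.abs_eq_natAbs] at *
      omega
    have z2 : pAux S M j (q.1, q.2 + ((S (M - (j + 1))).2 - q.2).sign) = 0 := by
      apply ih (by omega)
      simp only [Int.abs_eq_natAbs] at *
      omega
    split_ifs <;> simp [z1, z2]

noncomputable def tentA (S : ℕ → ℤ × ℤ) (M j : ℕ) : ℝ :=
  3 + ∑ i ∈ Finset.Ico (M - j) M, (2 - 4 * (((S (i + 1)).1 - (S i).1).natAbs : ℝ))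

lemma tent {S : ℕ → ℤ × ℤ} {M : ℕ} (hS : IsStrategy S M) (hM : 2 ≤ M) :
    ∀ j, j ≤ M - 1 → ∀ x : ℤ,
      tentA S M j - 4 * (((x - (S (M - j)).1).natAbs : ℝ)) ≤
        colL (3 * (M : ℤ) + 3) (pAux S M j) x := by
  intro j
  induction j with
  | zero =>
    intro _ x
    have h0 : tentA S M 0 = 3 := by simp [tentA]
    rw [h0]
    simp only [Nat.sub_zero, hS.1]
    by_cases hx : x = (0 : ℤ)
    · subst hx
      have hcol : colL (3 * (M : ℤ) + 3) (pAux S M 0) 0 = 3 := by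
        unfold colL
        rw [← Finset.sum_subset (s₁ := Finset.Icc (-(1:ℤ)) 1)
          (by intro y hy; rw [Finset.mem_Icc] at hy ⊢; omega)
          (by
            intro y hy hy2
            rw [Finset.mem_Icc] at hy2
            simp only [pAux, hS.1]
            rw [if_neg]
            simp only [Int.abs_eq_natAbs]
            omega)]
        have : ∀ y ∈ Finset.Icc (-(1:ℤ)) 1, pAux S M 0 ((0:ℤ), y) = 1 := by
          intro y hy
          rw [Finset.mem_Icc] at hy
          simp only [pAux, hS.1]
          rw [if_pos]
          simp only [Int.abs_eq_natAbs]
          omega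
        rw [Finset.sum_congr rfl this, Finset.sum_const]
        have h3 : ((1:ℤ) + 1 - -1).toNat = 3 := by omega
        simp [h3]
      rw [hcol]
      simp
    · have hnn : 1 ≤ (x - 0).natAbs := by omega
      have h4 : (1 : ℝ) ≤ ((x - 0).natAbs : ℝ) := by exact_mod_cast hnn
      have := colL_nonneg (K := 3 * (M : ℤ) + 3) (pAux_nonneg S M 0) x
      linarith
  | succ j ih =>
    intro hj x
    have hjM : j + 2 ≤ M := by omega
    set i := M - (j + 1) with hi
    have hi1 : 1 ≤ i := by omega
    have hiM : i < M := by omega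
    have hisucc : M - j = i + 1 := by omega
    have hstep := hS.2 i hi1 hiM
    have hpe : pAux S M (j + 1) = pstep (S i) (pAux S M j) := by
      rw [hi]
      rfl
    have htA : tentA S M (j + 1) =
        tentA S M j + (2 - 4 * (((S (i + 1)).1 - (S i).1).natAbs : ℝ)) := by
      unfold tentA
      rw [← hi, hisucc, ← Finset.insert_Ico_add_one_left_eq_Ico hiM,
        Finset.sum_insert (by simp)]
      ring
    have h0 := pAux_nonneg S M j
    have h1 := pAux_le_one S M j
    have hsupp : ∀ q : ℤ × ℤ,
        ¬(|q.1| ≤ 3 * (M : ℤ) + 3 - 2 ∧ |q.2| ≤ 3 * (M : ℤ) + 3 - 2) → pAux S M j q = 0 := by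
      intro q hq
      apply pAux_supp hS j (by omega)
      simp only [Int.abs_eq_natAbs] at *
      omega
    have hcb := center_bound hS (j + 1) i hi1 (by omega)
    have hc : |(S i).2| ≤ 3 * (M : ℤ) + 3 - 2 := by
      simp only [Int.abs_eq_natAbs] at *
      omega
    have hK2 : (2 : ℤ) ≤ 3 * (M : ℤ) + 3 := by omega
    rw [hpe]
    by_cases hx : x = (S i).1
    · have hcc := colL_pstep_center (S i) (pAux S M j) _ hK2 hc h0 h1 hsupp
      have hih := ih (by omega) ((S i).1)
      rw [hisucc] at hih
      have hcomm : (((S i).1 - (S (i + 1)).1).natAbs : ℝ) =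
          (((S (i + 1)).1 - (S i).1).natAbs : ℝ) := by
        rw [← Int.natAbs_neg, neg_sub]
      rw [hx, htA]
      have hzero : ((((S i).1 - (S i).1).natAbs : ℝ)) = 0 := by simp
      rw [hzero]
      rw [hcomm] at hih
      linarith
    · have hoff := colL_pstep_off (S i) (pAux S M j) _ hK2 hc hx h0 h1 hsupp
      have hihx := ih (by omega) x
      have hihs := ih (by omega) (x + ((S i).1 - x).sign)
      rw [hisucc] at hihx hihs
      have hshift := sign_shift hx
      have key : (x - (S (i + 1)).1).natAbs +
          (x + ((S i).1 - x).sign - (S (i + 1)).1).natAbs + 1 ≤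
          2 * (x - (S i).1).natAbs + 2 * ((S (i + 1)).1 - (S i).1).natAbs := by
        simp only [Int.abs_eq_natAbs] at hshift hstep
        omega
      have keyR : ((x - (S (i + 1)).1).natAbs : ℝ) +
          ((x + ((S i).1 - x).sign - (S (i + 1)).1).natAbs : ℝ) + 1 ≤
          2 * ((x - (S i).1).natAbs : ℝ) +
          2 * (((S (i + 1)).1 - (S i).1).natAbs : ℝ) := by
        exact_mod_cast key
      rw [htA]
      linarith

lemma chain {S : ℕ → ℤ × ℤ} {M : ℕ} (hS : IsStrategy S M) (hM : 2 ≤ M) :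
    ∀ j', j' ≤ M - 1 → ∀ j, j ≤ j' →
      ∑ q ∈ mybox (3 * (M : ℤ) + 3), pAux S M j q ≤
        ∑ q ∈ mybox (3 * (M : ℤ) + 3), pAux S M j' q := by
  intro j'
  induction j' with
  | zero =>
    intro _ j hj
    have h : j = 0 := by omega
    subst h
    exact le_refl _
  | succ j' ih =>
    intro hj' j hj
    have hstep : ∑ q ∈ mybox (3 * (M : ℤ) + 3), pAux S M j' q ≤
        ∑ q ∈ mybox (3 * (M : ℤ) + 3), pAux S M (j' + 1) q := by
      have hpe : pAux S M (j' + 1) = pstep (S (M - (j' + 1))) (pAux S M j') := rfl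
      rw [hpe]
      apply sum_pstep_ge _ _ _ (by omega) (pAux_nonneg S M j') (pAux_le_one S M j')
      intro q hq
      apply pAux_supp hS j' (by omega)
      simp only [Int.abs_eq_natAbs] at *
      omega
    rcases Nat.eq_or_lt_of_le hj with he | hlt
    · rw [he]
    · exact le_trans (ih (by omega) j (by omega)) hstep

/-- If at some point `t` the number of rounds `i ∈ {t, …, M-1}` in which the survivor
pauses in the `x`-projection (`x_i = x_{i+1}`) exceeds the number of rounds in which he
moves (`x_i ≠ x_{i+1}`) by at least `s`, then `t(S) ≥ c s²` for an absolute constant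
`c > 0`. -/
theorem stmt_9 :
    ∃ c : ℝ, 0 < c ∧
      ∀ n : ℕ, 8 ≤ n → ∀ M : ℕ, M = n / 4 →
        ∀ S : ℕ → ℤ × ℤ, IsStrategy S M →
          ∀ s : ℕ, 1 ≤ s →
            (∃ t : ℕ, 1 ≤ t ∧ t ≤ M ∧
              ((Finset.Ico t M).filter (fun i => (S i).1 = (S (i + 1)).1)).card ≥
                ((Finset.Ico t M).filter (fun i => (S i).1 ≠ (S (i + 1)).1)).card + s) →
            c * (s : ℝ) ^ 2 ≤ tS S M := by
  refine ⟨1/4, by norm_num, ?_⟩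
  rintro n hn M hM S hS s hs ⟨t, ht1, htM, hcard⟩
  have hM2 : 2 ≤ M := by omega
  have hPV : ((Finset.Ico t M).filter (fun i => (S i).1 = (S (i + 1)).1)).card +
      ((Finset.Ico t M).filter (fun i => (S i).1 ≠ (S (i + 1)).1)).card = M - t := by
    simp only [ne_eq]
    rw [Finset.card_filter_add_card_filter_not, Nat.card_Ico]
  set Pc := ((Finset.Ico t M).filter (fun i => (S i).1 = (S (i + 1)).1)).card with hPc
  set Vc := ((Finset.Ico t M).filter (fun i => (S i).1 ≠ (S (i + 1)).1)).card with hVc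
  have hPle : Pc ≤ M - t := by
    rw [← Nat.card_Ico t M]
    exact Finset.card_filter_le _ _
  have hsMt : s ≤ M - t := by omega
  have htlt : t < M := by omega
  have hj0 : M - (M - t) = t := by omega
  -- tentA lower bound
  have htent : (3 : ℝ) + 2 * s ≤ tentA S M (M - t) := by
    unfold tentA
    rw [hj0]
    rw [← Finset.sum_filter_add_sum_filter_not (Finset.Ico t M)
      (fun i => (S i).1 = (S (i + 1)).1)]
    have hp : ∑ i ∈ (Finset.Ico t M).filter (fun i => (S i).1 = (S (i + 1)).1),
        ((2 : ℝ) - 4 * (((S (i + 1)).1 - (S i).1).natAbs : ℝ)) = 2 * Pc := by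
      have he : ∀ i ∈ (Finset.Ico t M).filter (fun i => (S i).1 = (S (i + 1)).1),
          ((2 : ℝ) - 4 * (((S (i + 1)).1 - (S i).1).natAbs : ℝ)) = 2 := by
        intro i hi
        rw [Finset.mem_filter] at hi
        rw [hi.2]
        simp
      rw [Finset.sum_congr rfl he, Finset.sum_const, nsmul_eq_mul]
      ring
    have hv : ∑ i ∈ (Finset.Ico t M).filter (fun i => ¬ ((S i).1 = (S (i + 1)).1)),
        ((2 : ℝ) - 4 * (((S (i + 1)).1 - (S i).1).natAbs : ℝ)) = -2 * Vc := by
      have he : ∀ i ∈ (Finset.Ico t M).filter (fun i => ¬ ((S i).1 = (S (i + 1)).1)),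
          ((2 : ℝ) - 4 * (((S (i + 1)).1 - (S i).1).natAbs : ℝ)) = -2 := by
        intro i hi
        rw [Finset.mem_filter, Finset.mem_Ico] at hi
        have hstep := hS.2 i (by omega) hi.1.2
        have hne : (S (i + 1)).1 - (S i).1 ≠ 0 := fun h => hi.2 (by omega)
        have h1 : ((S (i + 1)).1 - (S i).1).natAbs = 1 := by
          simp only [Int.abs_eq_natAbs] at hstep
          omega
        rw [h1]
        norm_num
      rw [Finset.sum_congr rfl he, Finset.sum_const, nsmul_eq_mul]
      have : Vc = ((Finset.Ico t M).filter (fun i => ¬ ((S i).1 = (S (i + 1)).1))).card := rfl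
      rw [← this]
      ring
    rw [hp, hv]
    have hcast : (Vc : ℝ) + s ≤ (Pc : ℝ) := by exact_mod_cast hcard
    linarith
  -- column bound over a window
  set r : ℕ := s / 4 with hr
  have hxt := center_bound hS (M - t) t ht1 (by omega)
  have hcolbound : ∀ x ∈ Finset.Icc ((S t).1 - (r : ℤ)) ((S t).1 + (r : ℤ)),
      (s : ℝ) + 3 ≤ colL (3 * (M : ℤ) + 3) (pAux S M (M - t)) x := by
    intro x hx
    have htt := tent hS hM2 (M - t) (by omega) x
    rw [hj0] at htt
    rw [Finset.mem_Icc] at hx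
    have hna : ((x - (S t).1).natAbs : ℝ) ≤ (r : ℝ) := by
      have : (x - (S t).1).natAbs ≤ r := by omega
      exact_mod_cast this
    have h4r : 4 * (r : ℝ) ≤ (s : ℝ) := by
      have : 4 * r ≤ s := by omega
      exact_mod_cast this
    linarith
  have hcardIcc : (Finset.Icc ((S t).1 - (r : ℤ)) ((S t).1 + (r : ℤ))).card = 2 * r + 1 := by
    rw [Int.card_Icc]
    omega
  have hsum1 : ((2 * r + 1 : ℕ) : ℝ) * ((s : ℝ) + 3) ≤
      ∑ x ∈ Finset.Icc ((S t).1 - (r : ℤ)) ((S t).1 + (r : ℤ)),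
        colL (3 * (M : ℤ) + 3) (pAux S M (M - t)) x := by
    have := Finset.card_nsmul_le_sum
      (Finset.Icc ((S t).1 - (r : ℤ)) ((S t).1 + (r : ℤ)))
      (colL (3 * (M : ℤ) + 3) (pAux S M (M - t))) ((s : ℝ) + 3) hcolbound
    rw [hcardIcc] at this
    rw [nsmul_eq_mul] at this
    exact_mod_cast this
  have hsub : Finset.Icc ((S t).1 - (r : ℤ)) ((S t).1 + (r : ℤ)) ⊆
      Finset.Icc (-(3 * (M : ℤ) + 3)) (3 * (M : ℤ) + 3) := by
    intro x hx
    rw [Finset.mem_Icc] at hx ⊢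
    simp only [Int.abs_eq_natAbs] at hxt
    omega
  have hsum2 : ∑ x ∈ Finset.Icc ((S t).1 - (r : ℤ)) ((S t).1 + (r : ℤ)),
      colL (3 * (M : ℤ) + 3) (pAux S M (M - t)) x ≤
      ∑ x ∈ Finset.Icc (-(3 * (M : ℤ) + 3)) (3 * (M : ℤ) + 3),
        colL (3 * (M : ℤ) + 3) (pAux S M (M - t)) x :=
    Finset.sum_le_sum_of_subset_of_nonneg hsub
      (fun x _ _ => colL_nonneg (pAux_nonneg S M (M - t)) x)
  have hprod : ∑ q ∈ mybox (3 * (M : ℤ) + 3), pAux S M (M - t) q =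
      ∑ x ∈ Finset.Icc (-(3 * (M : ℤ) + 3)) (3 * (M : ℤ) + 3),
        colL (3 * (M : ℤ) + 3) (pAux S M (M - t)) x := by
    unfold mybox colL
    rw [Finset.sum_product]
  have hchain := chain hS hM2 (M - 1) (le_refl _) (M - t) (by omega)
  have htS : tS S M = ∑ q ∈ mybox (3 * (M : ℤ) + 3), pAux S M (M - 1) q := by
    unfold tS pS
    apply finsum_eq_finset_sum_of_support_subset
    intro q hq
    simp only [Function.mem_support] at hq
    by_contra hbox
    apply hq
    apply pAux_supp hS (M - 1) (by omega)
    rw [Finset.mem_coe, mem_box] at hbox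
    simp only [Int.abs_eq_natAbs] at *
    omega
  -- numeric
  have hnat : s ^ 2 ≤ 4 * (2 * r + 1) * (s + 3) := by
    have h43 : s ≤ 4 * r + 3 := by omega
    nlinarith
  have hnum : (s : ℝ) ^ 2 ≤ 4 * ((2 * r + 1 : ℕ) : ℝ) * ((s : ℝ) + 3) := by
    exact_mod_cast hnat
  rw [htS]
  have final : ((2 * r + 1 : ℕ) : ℝ) * ((s : ℝ) + 3) ≤
      ∑ q ∈ mybox (3 * (M : ℤ) + 3), pAux S M (M - 1) q := by
    rw [← hprod] at hsum2
    linarith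
  linarith
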